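/- arXiv:1309.0158 — 2 statements merged into one kernel-verified Lean document; each statement's English description precedes it below -/
import Mathlib

section
/- Let Q̃ be a stochastic matrix on a finite set 𝒱, μ a probability vector on 𝒱, β ∈ (0,1), and P̃ := (1−β)·Q̃ + β·𝟙μ, where 𝟙μ is the matrix with entry (𝟙μ)_{uv} = μ_v. Let π̃ be any invariant probability vector of P̃ and let W ⊆ 𝒱 with W ≠ 𝒱. Then the exit probability from W satisfies γ̃_W ≥ β·(1 − μ(W)), where μ(W) := Σ_{w∈W} μ_w. -/
open scoped Classical BigOperators
open Finset

variable {V : Type*}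

/-- A (row-)stochastic matrix: nonnegative entries, rows summing to one. -/
def IsStochastic [Fintype V] (P : Matrix V V ℝ) : Prop :=
  (∀ u v, 0 ≤ P u v) ∧ ∀ u, ∑ v, P u v = 1

/-- Irreducibility: the digraph with an edge `(u,v)` whenever `P u v > 0`
is strongly connected. -/
def IrreducibleMatrix [Fintype V] (P : Matrix V V ℝ) : Prop :=
  ∀ u v : V, Relation.ReflTransGen (fun a b => 0 < P a b) u v

/-- `p` is an invariant probability (row) vector of `P`. -/
def InvariantProb [Fintype V] (P : Matrix V V ℝ) (p : V → ℝ) : Prop :=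
  (∀ v, 0 ≤ p v) ∧ (∑ v, p v = 1) ∧ ∀ v, ∑ u, p u * P u v = p v

/-- Total variation distance. -/
noncomputable def tvDist [Fintype V] (mu p : V → ℝ) : ℝ :=
  (1 / 2) * ∑ v, |mu v - p v|

/-- The smallest positive solution of `x * log (e^2 / x) = 1`. -/
noncomputable def xstar : ℝ :=
  sInf {x : ℝ | 0 < x ∧ x * Real.log (Real.exp 2 / x) = 1}

/-- The function `Ψ`: `Ψ(x) = x log(e²/x)` for `x ≤ x*`, and `1` for `x > x*`
(note `Ψ(0) = 0` since `Real.log (e²/0) = Real.log 0 = 0`). -/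
noncomputable def Psi (x : ℝ) : ℝ :=
  if x ≤ xstar then x * Real.log (Real.exp 2 / x) else 1

open Fin.NatCast in
/-- `phi P W w k` is the probability that a chain with transition matrix `P`
started at `w` exits `W` exactly at time `k`: the sum over `(k+1)`-tuples
`ξ` with `ξ 0 = w`, `ξ l ∈ W` for `0 < l < k`, `ξ k ∉ W`, of `∏ P (ξ (l-1)) (ξ l)`. -/
noncomputable def phi [Fintype V] (P : Matrix V V ℝ) (W : Finset V) (w : V) (k : ℕ) : ℝ :=
  ∑ ξ ∈ Finset.univ.filter (fun ξ : Fin (k + 1) → V =>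
      ξ 0 = w ∧ (∀ l : ℕ, 0 < l → l < k → ξ l ∈ W) ∧ ξ k ∉ W),
    ∏ l ∈ Finset.range k, P (ξ l) (ξ (l + 1))

/-- `(1/t) * min_{w ∈ W, p w > 0} ∑_{k=1}^t phi w k` (the minimum over an empty
index set is taken to be `1`). -/
noncomputable def exitProbAux [Fintype V] (P : Matrix V V ℝ) (p : V → ℝ) (W : Finset V)
    (t : ℕ) : ℝ :=
  if h : (W.filter fun w => 0 < p w).Nonempty then
    (W.filter fun w => 0 < p w).inf' h
      (fun w => (1 / (t : ℝ)) * ∑ k ∈ Finset.Icc 1 t, phi P W w k)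
  else 1

/-- The exit probability from `W`:
`sup_{t ≥ 1} min_{w ∈ W, p w > 0} (1/t) ∑_{k=1}^t phi w k`. -/
noncomputable def exitProb [Fintype V] (P : Matrix V V ℝ) (p : V → ℝ) (W : Finset V) : ℝ :=
  sSup {x : ℝ | ∃ t : ℕ, 1 ≤ t ∧ x = exitProbAux P p W t}

/-- The entrance time `τ*_W := min_{u ∉ W} τ^u`. -/
noncomputable def entranceTime (tau : V → ℝ) (W : Finset V) : ℝ :=
  sInf {x : ℝ | ∃ u, u ∉ W ∧ x = tau u}

open Fin.NatCast

lemma castA (k l : ℕ) (hl : l < k + 1) :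
    ((l + 1 : ℕ) : Fin (k + 2)) = Fin.succ ((l : ℕ) : Fin (k + 1)) := by
  apply Fin.ext
  rw [Fin.val_succ, Fin.val_natCast, Fin.val_natCast]
  rw [Nat.mod_eq_of_lt (by omega), Nat.mod_eq_of_lt hl]

lemma castB (k l : ℕ) (hl : l < k + 1) :
    ((l : ℕ) : Fin (k + 2)) + 1 = Fin.succ ((l : ℕ) : Fin (k + 1)) := by
  apply Fin.ext
  rw [Fin.val_succ, Fin.val_add, Fin.val_natCast, Fin.val_natCast, Fin.val_one]
  rw [Nat.mod_eq_of_lt hl, Nat.mod_eq_of_lt (by omega : l < k + 2),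
    Nat.mod_eq_of_lt (by omega)]

lemma castC (k : ℕ) (a : Fin (k + 1)) (ha : a.val < k) :
    a.succ + 1 = Fin.succ (a + 1) := by
  have ha' : a.val < k := ha
  apply Fin.ext
  rw [Fin.val_add, Fin.val_succ, Fin.val_succ, Fin.val_add, Fin.val_one', Fin.val_one']
  rw [Nat.mod_eq_of_lt (show 1 < k + 1 + 1 by omega),
    Nat.mod_eq_of_lt (show 1 < k + 1 by omega),
    Nat.mod_eq_of_lt (show a.val + 1 + 1 < k + 1 + 1 by omega),
    Nat.mod_eq_of_lt (show a.val + 1 < k + 1 by omega)]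

lemma tot_sum [Fintype V] {P : Matrix V V ℝ} (hP : IsStochastic P) :
    ∀ (k : ℕ) (w : V),
      ∑ ξ ∈ Finset.univ.filter (fun ξ : Fin (k + 1) → V => ξ 0 = w),
        ∏ l ∈ Finset.range k, P (ξ l) (ξ (l + 1)) = 1 := by
  intro k
  induction k with
  | zero =>
    intro w
    have hfil : Finset.univ.filter (fun ξ : Fin 1 → V => ξ 0 = w) = {fun _ => w} := by
      ext ξ
      simp only [Finset.mem_filter, Finset.mem_univ, true_and, Finset.mem_singleton]
      constructor
      · intro h; funext i; have : i = 0 := Subsingleton.elim _ _; rw [this, h]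
      · intro h; rw [h]
    rw [hfil]
    simp
  | succ k ih =>
    intro w
    rw [Finset.sum_filter]
    rw [← Equiv.sum_comp (Fin.consEquiv (fun _ : Fin (k + 2) => V))
      (fun ξ : Fin (k + 2) → V =>
        if ξ 0 = w then ∏ l ∈ Finset.range (k + 1), P (ξ l) (ξ (l + 1)) else 0)]
    have happ : ∀ p : V × (Fin (k + 1) → V),
        (Fin.consEquiv (fun _ : Fin (k + 2) => V)) p = Fin.cons p.1 p.2 := fun p => rfl
    simp only [happ]
    rw [Fintype.sum_prod_type]
    simp only [Fin.cons_zero]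
    have hsw : ∀ x : V,
        (∑ ζ : Fin (k + 1) → V, if x = w then
            ∏ l ∈ Finset.range (k + 1),
              P ((Fin.cons x ζ : Fin (k + 2) → V) l) ((Fin.cons x ζ : Fin (k + 2) → V) (l + 1))
          else 0)
        = if x = w then (∑ ζ : Fin (k + 1) → V,
            ∏ l ∈ Finset.range (k + 1),
              P ((Fin.cons x ζ : Fin (k + 2) → V) l) ((Fin.cons x ζ : Fin (k + 2) → V) (l + 1)))
          else 0 := by
      intro x
      split_ifs
      · rfl
      · exact Finset.sum_const_zero
    rw [Finset.sum_congr rfl fun x _ => hsw x]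
    rw [Finset.sum_ite_eq' Finset.univ w]
    simp only [Finset.mem_univ, if_true]
    have key : ∀ ζ : Fin (k + 1) → V,
        ∏ l ∈ Finset.range (k + 1),
          P ((Fin.cons w ζ : Fin (k + 2) → V) l) ((Fin.cons w ζ : Fin (k + 2) → V) (l + 1))
        = (∏ l ∈ Finset.range k, P (ζ l) (ζ (l + 1))) * P w (ζ 0) := by
      intro ζ
      rw [Finset.prod_range_succ']
      congr 1
      · apply Finset.prod_congr rfl
        intro l hl
        rw [Finset.mem_range] at hl
        have hval : ((l : ℕ) : Fin (k + 1)).val < k := by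
          rw [Fin.val_natCast]
          rw [Nat.mod_eq_of_lt (show l < k + 1 by omega)]
          omega
        rw [castA k l (by omega), castC k _ hval]
        simp only [Fin.cons_succ]
    calc ∑ ζ : Fin (k + 1) → V,
          ∏ l ∈ Finset.range (k + 1),
            P ((Fin.cons w ζ : Fin (k + 2) → V) l) ((Fin.cons w ζ : Fin (k + 2) → V) (l + 1))
        = ∑ ζ : Fin (k + 1) → V, (∏ l ∈ Finset.range k, P (ζ l) (ζ (l + 1))) * P w (ζ 0) := by
          exact Finset.sum_congr rfl fun ζ _ => key ζ
      _ = ∑ v : V, ∑ ζ ∈ Finset.univ.filter (fun ζ : Fin (k + 1) → V => ζ 0 = v),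
            (∏ l ∈ Finset.range k, P (ζ l) (ζ (l + 1))) * P w (ζ 0) :=
          (Finset.sum_fiberwise Finset.univ (fun ζ : Fin (k + 1) → V => ζ 0) _).symm
      _ = ∑ v : V, P w v := by
          apply Finset.sum_congr rfl
          intro v _
          have hc : ∀ ζ ∈ Finset.univ.filter (fun ζ : Fin (k + 1) → V => ζ 0 = v),
              (∏ l ∈ Finset.range k, P (ζ l) (ζ (l + 1))) * P w (ζ 0)
              = (∏ l ∈ Finset.range k, P (ζ l) (ζ (l + 1))) * P w v := by
            intro ζ hζ
            rw [Finset.mem_filter] at hζ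
            rw [hζ.2]
          rw [Finset.sum_congr rfl hc, ← Finset.sum_mul, ih v, one_mul]
      _ = 1 := hP.2 w

lemma phi_nonneg [Fintype V] {P : Matrix V V ℝ} (hP : IsStochastic P)
    (W : Finset V) (w : V) (k : ℕ) : 0 ≤ phi P W w k := by
  apply Finset.sum_nonneg
  intro ξ _
  exact Finset.prod_nonneg fun l _ => hP.1 _ _

lemma phi_le_one [Fintype V] {P : Matrix V V ℝ} (hP : IsStochastic P)
    (W : Finset V) (w : V) (k : ℕ) : phi P W w k ≤ 1 := by
  unfold phi
  rw [← tot_sum hP k w]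
  apply Finset.sum_le_sum_of_subset_of_nonneg
  · intro ξ hξ
    simp only [Finset.mem_filter, Finset.mem_univ, true_and] at hξ ⊢
    exact hξ.1
  · intro ξ _ _
    exact Finset.prod_nonneg fun l _ => hP.1 _ _

lemma phi_one_eq [Fintype V] (P : Matrix V V ℝ) (W : Finset V) (w : V) :
    phi P W w 1 = ∑ v ∈ Finset.univ.filter (fun v => v ∉ W), P w v := by
  unfold phi
  apply Finset.sum_nbij' (fun ξ : Fin 2 → V => ξ 1) (fun v => ![w, v])
  · intro ξ hξ
    simp only [Finset.mem_filter, Finset.mem_univ, true_and] at hξ ⊢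
    have := hξ.2.2
    simpa using this
  · intro v hv
    simp only [Finset.mem_filter, Finset.mem_univ, true_and] at hv ⊢
    refine ⟨rfl, fun l h1 h2 => absurd h2 (by omega), ?_⟩
    simpa using hv
  · intro ξ hξ
    simp only [Finset.mem_filter, Finset.mem_univ, true_and] at hξ
    funext i
    fin_cases i
    · simp [hξ.1]
    · simp
  · intro v _
    simp
  · intro ξ hξ
    simp only [Finset.mem_filter, Finset.mem_univ, true_and] at hξ
    rw [Finset.prod_range_one]
    have h0 : ((0 : ℕ) : Fin 2) = 0 := rfl
    have h01 : ((0 : ℕ) : Fin 2) + 1 = 1 := rfl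
    rw [h0]
    norm_num [hξ.1]

/-- for `Pt = (1-β) Qt + β 𝟙μ`, the exit probability from any
`W ≠ 𝒱` satisfies `γ̃_W ≥ β (1 - μ(W))`. -/
theorem stmt8 [Fintype V] (Qt Pt : Matrix V V ℝ) (mu pit : V → ℝ) (β : ℝ)
    (W : Finset V)
    (hQt : IsStochastic Qt) (hmu : (∀ v, 0 ≤ mu v) ∧ ∑ v, mu v = 1)
    (hβ : 0 < β ∧ β < 1)
    (hPtdef : ∀ u v, Pt u v = (1 - β) * Qt u v + β * mu v)
    (hpit : InvariantProb Pt pit) (hW : W ≠ Finset.univ) :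
    β * (1 - ∑ w ∈ W, mu w) ≤ exitProb Pt pit W := by
  obtain ⟨hβ0, hβ1⟩ := hβ
  have hmu0 := hmu.1
  have hPt : IsStochastic Pt := by
    constructor
    · intro u v
      rw [hPtdef]
      have h1 := hQt.1 u v
      have h2 := hmu0 v
      nlinarith
    · intro u
      simp only [hPtdef]
      rw [Finset.sum_add_distrib, ← Finset.mul_sum, ← Finset.mul_sum, hQt.2 u, hmu.2]
      ring
  set μW := ∑ w ∈ W, mu w with hμW
  have hμWnn : 0 ≤ μW := Finset.sum_nonneg fun w _ => hmu0 w
  have hμWle : μW ≤ 1 := by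
    rw [← hmu.2]
    exact Finset.sum_le_sum_of_subset_of_nonneg (Finset.subset_univ W)
      (fun v _ _ => hmu0 v)
  have hcompl : Finset.univ.filter (fun v => v ∉ W) = Wᶜ := by ext v; simp
  have hsumc : ∑ v ∈ Wᶜ, mu v = 1 - μW := by
    have h := Finset.sum_compl_add_sum W mu
    rw [hmu.2] at h
    linarith
  have hphi1 : ∀ w : V, β * (1 - μW) ≤ phi Pt W w 1 := by
    intro w
    rw [phi_one_eq, hcompl]
    calc β * (1 - μW) = ∑ v ∈ Wᶜ, β * mu v := by rw [← Finset.mul_sum, hsumc]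
      _ ≤ ∑ v ∈ Wᶜ, Pt w v := by
          apply Finset.sum_le_sum
          intro v _
          rw [hPtdef]
          have h1 := hQt.1 w v
          nlinarith
  have hbl1 : β * (1 - μW) ≤ 1 := by nlinarith
  have haux1 : β * (1 - μW) ≤ exitProbAux Pt pit W 1 := by
    unfold exitProbAux
    split_ifs with h
    · apply Finset.le_inf'
      intro w hw
      have he : (1 / ((1 : ℕ) : ℝ)) * ∑ k ∈ Finset.Icc 1 1, phi Pt W w k
          = phi Pt W w 1 := by
        rw [Finset.Icc_self, Finset.sum_singleton]
        norm_num
      rw [he]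
      exact hphi1 w
    · exact hbl1
  have hub : ∀ x ∈ {x : ℝ | ∃ t : ℕ, 1 ≤ t ∧ x = exitProbAux Pt pit W t}, x ≤ 1 := by
    rintro x ⟨t, ht, rfl⟩
    unfold exitProbAux
    split_ifs with h
    · obtain ⟨w, hw⟩ := h
      apply le_trans (Finset.inf'_le _ hw)
      have ht0 : (0 : ℝ) < (t : ℝ) := by exact_mod_cast Nat.lt_of_lt_of_le Nat.zero_lt_one ht
      calc (1 / (t : ℝ)) * ∑ k ∈ Finset.Icc 1 t, phi Pt W w k
          ≤ (1 / (t : ℝ)) * ∑ k ∈ Finset.Icc 1 t, (1 : ℝ) := by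
            apply mul_le_mul_of_nonneg_left
            · exact Finset.sum_le_sum fun k _ => phi_le_one hPt W w k
            · positivity
        _ = (1 / (t : ℝ)) * (t : ℝ) := by
            rw [Finset.sum_const, Nat.card_Icc]
            simp
        _ = 1 := by field_simp
    · exact le_refl 1
  calc β * (1 - μW) ≤ exitProbAux Pt pit W 1 := haux1
    _ ≤ exitProb Pt pit W := le_csSup ⟨1, hub⟩ ⟨1, le_refl 1, rfl⟩
end

section
/- Let Q and Q̃ be stochastic matrices on a finite set 𝒱, μ a probability vector on 𝒱, and β ∈ (0,1). Set P := (1−β)·Q + β·𝟙μ and P̃ := (1−β)·Q̃ + β·𝟙μ, where 𝟙μ is the matrix with entries (𝟙μ)_{uv} = μ_v. Suppose P is irreducible with invariant probability vector π, let π̃ be an invariant probability vector of P̃, and let W ⊆ 𝒱 be a set containing supp(Q̃ − Q) with W ≠ 𝒱 and μ(W) < 1. Then ‖π̃ − π‖ ≤ Ψ( (1+β)·π(W) / (β²·(1 − μ(W))) ), where π(W) := Σ_{w∈W} π_w and μ(W) := Σ_{w∈W} μ_w. -/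
open scoped Classical BigOperators
open Finset

variable {V : Type*}

lemma exp_two_ge_four : (4 : ℝ) ≤ Real.exp 2 := by
  have h := Real.exp_one_gt_d9
  have h2 : Real.exp 2 = Real.exp 1 * Real.exp 1 := by
    rw [← Real.exp_add]; norm_num
  nlinarith [Real.exp_pos 1]

lemma xstar_le_one : xstar ≤ 1 := by
  have hpos : (0 : ℝ) < Real.exp (-2) := Real.exp_pos _
  have hle : Real.exp (-2) ≤ 1 := by
    have hmul : Real.exp (-2) * Real.exp 2 = 1 := by rw [← Real.exp_add]; norm_num
    nlinarith [Real.exp_pos 2, Real.one_le_exp (by norm_num : (0:ℝ) ≤ 2), hpos.le]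
  have hcont : ContinuousOn (fun x : ℝ => x * Real.log (Real.exp 2 / x))
      (Set.Icc (Real.exp (-2)) 1) := by
    apply ContinuousOn.mul continuousOn_id
    apply ContinuousOn.log
    · exact ContinuousOn.div continuousOn_const continuousOn_id
        (fun x hx => ne_of_gt (lt_of_lt_of_le hpos hx.1))
    · intro x hx
      have hx0 : 0 < x := lt_of_lt_of_le hpos hx.1
      positivity
  have hfa : (fun x : ℝ => x * Real.log (Real.exp 2 / x)) (Real.exp (-2))
      = 4 * Real.exp (-2) := by
    simp only
    rw [← Real.exp_sub, Real.log_exp]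
    norm_num; ring
  have hfb : (fun x : ℝ => x * Real.log (Real.exp 2 / x)) 1 = 2 := by
    simp [Real.log_exp]
  have hmem : (1 : ℝ) ∈ Set.Icc ((fun x : ℝ => x * Real.log (Real.exp 2 / x)) (Real.exp (-2)))
      ((fun x : ℝ => x * Real.log (Real.exp 2 / x)) 1) := by
    rw [hfa, hfb]
    constructor
    · have h4 := exp_two_ge_four
      have hmul : Real.exp (-2) * Real.exp 2 = 1 := by rw [← Real.exp_add]; norm_num
      nlinarith [hpos.le]
    · norm_num
  obtain ⟨c, hc, hfc⟩ := intermediate_value_Icc hle hcont hmem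
  have hc0 : 0 < c := lt_of_lt_of_le hpos hc.1
  have hcmem : c ∈ {x : ℝ | 0 < x ∧ x * Real.log (Real.exp 2 / x) = 1} := ⟨hc0, hfc⟩
  have hbdd : BddBelow {x : ℝ | 0 < x ∧ x * Real.log (Real.exp 2 / x) = 1} :=
    ⟨0, fun y hy => hy.1.le⟩
  calc xstar ≤ c := csInf_le hbdd hcmem
    _ ≤ 1 := hc.2

/-- robustness of PageRank. If `P = (1-β) Q + β 𝟙μ` is irreducible
with invariant probability vector `pi`, `Pt = (1-β) Qt + β 𝟙μ` has invariant
probability vector `pit`, and `W ⊇ supp(Qt - Q)` with `W ≠ 𝒱` and `μ(W) < 1`, then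
`‖pit - pi‖ ≤ Ψ((1+β) π(W) / (β² (1 - μ(W))))`. -/
theorem stmt10 [Fintype V] (Q Qt P Pt : Matrix V V ℝ) (mu pi pit : V → ℝ) (β : ℝ)
    (W : Finset V)
    (hQ : IsStochastic Q) (hQt : IsStochastic Qt)
    (hmu : (∀ v, 0 ≤ mu v) ∧ ∑ v, mu v = 1)
    (hβ : 0 < β ∧ β < 1)
    (hPdef : ∀ u v, P u v = (1 - β) * Q u v + β * mu v)
    (hPtdef : ∀ u v, Pt u v = (1 - β) * Qt u v + β * mu v)
    (hirr : IrreducibleMatrix P) (hpi : InvariantProb P pi)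
    (hpit : InvariantProb Pt pit)
    (hW : ∀ u : V, Q u ≠ Qt u → u ∈ W) (hWne : W ≠ Finset.univ)
    (hmuW : ∑ w ∈ W, mu w < 1) :
    tvDist pit pi ≤
      Psi ((1 + β) * (∑ w ∈ W, pi w) / (β ^ 2 * (1 - ∑ w ∈ W, mu w))) := by
  obtain ⟨hβ0, hβ1⟩ := hβ
  obtain ⟨hpi0, hpisum, hpiinv⟩ := hpi
  obtain ⟨hpit0, hpitsum, hpitinv⟩ := hpit
  set piW := ∑ w ∈ W, pi w with hpiWdef
  set muW := ∑ w ∈ W, mu w with hmuWdef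
  have hpiW0 : 0 ≤ piW := Finset.sum_nonneg fun w _ => hpi0 w
  have hmuW0 : 0 ≤ muW := Finset.sum_nonneg fun w _ => hmu.1 w
  have hmuW1 : 0 < 1 - muW := by linarith
  -- stationarity equations
  have hpieq : ∀ v, pi v = (1 - β) * (∑ u, pi u * Q u v) + β * mu v := by
    intro v
    calc pi v = ∑ u, pi u * P u v := (hpiinv v).symm
      _ = ∑ u, ((1 - β) * (pi u * Q u v) + pi u * (β * mu v)) := by
          apply Finset.sum_congr rfl; intro u _; rw [hPdef]; ring
      _ = (1 - β) * (∑ u, pi u * Q u v) + (∑ u, pi u) * (β * mu v) := by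
          rw [Finset.sum_add_distrib, ← Finset.mul_sum, ← Finset.sum_mul]
      _ = _ := by rw [hpisum]; ring
  have hpiteq : ∀ v, pit v = (1 - β) * (∑ u, pit u * Qt u v) + β * mu v := by
    intro v
    calc pit v = ∑ u, pit u * Pt u v := (hpitinv v).symm
      _ = ∑ u, ((1 - β) * (pit u * Qt u v) + pit u * (β * mu v)) := by
          apply Finset.sum_congr rfl; intro u _; rw [hPtdef]; ring
      _ = (1 - β) * (∑ u, pit u * Qt u v) + (∑ u, pit u) * (β * mu v) := by
          rw [Finset.sum_add_distrib, ← Finset.mul_sum, ← Finset.sum_mul]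
      _ = _ := by rw [hpitsum]; ring
  -- key identity
  have key : ∀ v, pit v - pi v =
      (1 - β) * ((∑ u, (pit u - pi u) * Qt u v) + ∑ u, pi u * (Qt u v - Q u v)) := by
    intro v
    have h1 := hpieq v
    have h2 := hpiteq v
    have h3 : (∑ u, (pit u - pi u) * Qt u v) + (∑ u, pi u * (Qt u v - Q u v))
        = (∑ u, pit u * Qt u v) - (∑ u, pi u * Q u v) := by
      rw [← Finset.sum_add_distrib, ← Finset.sum_sub_distrib]
      apply Finset.sum_congr rfl; intro u _; ring
    rw [h3]; linarith
  -- L1 bound on the error term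
  have herr : ∑ v, |∑ u, pi u * (Qt u v - Q u v)| ≤ 2 * piW := by
    have h1 : ∀ v : V, |∑ u, pi u * (Qt u v - Q u v)| ≤ ∑ u, pi u * |Qt u v - Q u v| := by
      intro v
      calc |∑ u, pi u * (Qt u v - Q u v)| ≤ ∑ u, |pi u * (Qt u v - Q u v)| :=
            Finset.abs_sum_le_sum_abs _ _
        _ = ∑ u, pi u * |Qt u v - Q u v| := by
            apply Finset.sum_congr rfl; intro u _
            rw [abs_mul, abs_of_nonneg (hpi0 u)]
    calc ∑ v, |∑ u, pi u * (Qt u v - Q u v)|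
        ≤ ∑ v, ∑ u, pi u * |Qt u v - Q u v| := Finset.sum_le_sum fun v _ => h1 v
      _ = ∑ u, pi u * (∑ v, |Qt u v - Q u v|) := by
          rw [Finset.sum_comm]
          apply Finset.sum_congr rfl; intro u _
          rw [Finset.mul_sum]
      _ = ∑ u ∈ W, pi u * (∑ v, |Qt u v - Q u v|) := by
          symm
          apply Finset.sum_subset (Finset.subset_univ W)
          intro u _ hu
          have : Q u = Qt u := by
            by_contra hne
            exact hu (hW u hne)
          simp [this]
      _ ≤ ∑ u ∈ W, pi u * 2 := by
          apply Finset.sum_le_sum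
          intro u _
          apply mul_le_mul_of_nonneg_left _ (hpi0 u)
          calc ∑ v, |Qt u v - Q u v| ≤ ∑ v, (Qt u v + Q u v) := by
                apply Finset.sum_le_sum
                intro v _
                have := abs_sub (Qt u v) (Q u v)
                calc |Qt u v - Q u v| ≤ |Qt u v| + |Q u v| := abs_sub _ _
                  _ = Qt u v + Q u v := by
                      rw [abs_of_nonneg (hQt.1 u v), abs_of_nonneg (hQ.1 u v)]
            _ = 2 := by rw [Finset.sum_add_distrib, hQt.2 u, hQ.2 u]; norm_num
      _ = 2 * piW := by
          rw [hpiWdef, Finset.mul_sum]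
          apply Finset.sum_congr rfl; intros; ring
  -- contraction of the first term
  have hcontr : ∑ v, |∑ u, (pit u - pi u) * Qt u v| ≤ ∑ u, |pit u - pi u| := by
    calc ∑ v, |∑ u, (pit u - pi u) * Qt u v|
        ≤ ∑ v, ∑ u, |pit u - pi u| * Qt u v := by
          apply Finset.sum_le_sum
          intro v _
          calc |∑ u, (pit u - pi u) * Qt u v| ≤ ∑ u, |(pit u - pi u) * Qt u v| :=
                Finset.abs_sum_le_sum_abs _ _
            _ = ∑ u, |pit u - pi u| * Qt u v := by
                apply Finset.sum_congr rfl; intro u _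
                rw [abs_mul, abs_of_nonneg (hQt.1 u v)]
      _ = ∑ u, |pit u - pi u| * (∑ v, Qt u v) := by
          rw [Finset.sum_comm]
          apply Finset.sum_congr rfl; intro u _
          rw [Finset.mul_sum]
      _ = ∑ u, |pit u - pi u| := by
          apply Finset.sum_congr rfl; intro u _
          rw [hQt.2 u, mul_one]
  -- main L1 inequality
  have hL1 : ∑ v, |pit v - pi v| ≤ 2 * (1 - β) * piW / β := by
    have hstep : ∑ v, |pit v - pi v| ≤
        (1 - β) * ((∑ v, |pit v - pi v|) + 2 * piW) := by
      calc ∑ v, |pit v - pi v|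
          = ∑ v, (1 - β) * |(∑ u, (pit u - pi u) * Qt u v) + ∑ u, pi u * (Qt u v - Q u v)| := by
            apply Finset.sum_congr rfl; intro v _
            rw [key v, abs_mul, abs_of_nonneg (by linarith : (0:ℝ) ≤ 1 - β)]
        _ ≤ ∑ v, (1 - β) * (|∑ u, (pit u - pi u) * Qt u v| + |∑ u, pi u * (Qt u v - Q u v)|) := by
            apply Finset.sum_le_sum
            intro v _
            exact mul_le_mul_of_nonneg_left (abs_add_le _ _) (by linarith)
        _ = (1 - β) * ((∑ v, |∑ u, (pit u - pi u) * Qt u v|)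
              + ∑ v, |∑ u, pi u * (Qt u v - Q u v)|) := by
            rw [← Finset.mul_sum, Finset.sum_add_distrib]
        _ ≤ (1 - β) * ((∑ v, |pit v - pi v|) + 2 * piW) := by
            apply mul_le_mul_of_nonneg_left _ (by linarith)
            have := herr
            have := hcontr
            linarith
    have : β * (∑ v, |pit v - pi v|) ≤ (1 - β) * (2 * piW) := by nlinarith
    rw [le_div_iff₀ hβ0]
    nlinarith
  -- tvDist bounds
  have htv1 : tvDist pit pi ≤ 1 := by
    unfold tvDist
    have : ∑ v, |pit v - pi v| ≤ ∑ v, (pit v + pi v) := by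
      apply Finset.sum_le_sum
      intro v _
      calc |pit v - pi v| ≤ |pit v| + |pi v| := abs_sub _ _
        _ = pit v + pi v := by rw [abs_of_nonneg (hpit0 v), abs_of_nonneg (hpi0 v)]
    rw [Finset.sum_add_distrib, hpitsum, hpisum] at this
    linarith
  have htv2 : tvDist pit pi ≤ (1 - β) * piW / β := by
    unfold tvDist
    rw [le_div_iff₀ hβ0] at hL1 ⊢
    nlinarith
  set x := (1 + β) * piW / (β ^ 2 * (1 - muW)) with hxdef
  have hx0 : 0 ≤ x := by positivity
  -- (1-β) piW / β ≤ 2 x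
  have hlin : (1 - β) * piW / β ≤ 2 * x := by
    have hd : 0 < β ^ 2 * (1 - muW) := by positivity
    have h2x : 2 * x = (2 * ((1 + β) * piW)) / (β ^ 2 * (1 - muW)) := by
      rw [hxdef]; ring
    rw [h2x, div_le_div_iff₀ hβ0 hd]
    have hpb : 0 ≤ piW * β := mul_nonneg hpiW0 hβ0.le
    have hbr : (1 - β) * β * (1 - muW) ≤ 2 * (1 + β) := by nlinarith
    nlinarith [mul_le_mul_of_nonneg_left hbr hpb]
  have htv3 : tvDist pit pi ≤ 2 * x := le_trans htv2 hlin
  -- conclude via Psi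
  unfold Psi
  split_ifs with hcase
  · -- x ≤ xstar ≤ 1
    have hx1 : x ≤ 1 := le_trans hcase xstar_le_one
    rcases eq_or_lt_of_le hx0 with h0 | h0
    · rw [← h0]
      simp only [zero_mul]
      rw [← h0] at htv3
      linarith
    · have hlog : (2 : ℝ) ≤ Real.log (Real.exp 2 / x) := by
        rw [Real.log_div (by positivity) (ne_of_gt h0), Real.log_exp]
        have : Real.log x ≤ 0 := Real.log_nonpos hx0 hx1
        linarith
      calc tvDist pit pi ≤ 2 * x := htv3
        _ = x * 2 := by ring
        _ ≤ x * Real.log (Real.exp 2 / x) := by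
            apply mul_le_mul_of_nonneg_left hlog hx0
  · exact htv1
end
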